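/- If a graph G on n vertices has a Hamiltonian path, then E(G) ≥ n − 3 + 2√2. -/

import Mathlib

open Finset Matrix

noncomputable section

variable {V : Type*} [Fintype V] [DecidableEq V]

/-- The adjacency matrix of a simple graph is Hermitian (over ℝ). -/
theorem SimpleGraph.isHermitian_adjMatrix' (G : SimpleGraph V) [DecidableRel G.Adj] :
    (G.adjMatrix ℝ).IsHermitian := by
  rw [Matrix.IsHermitian, Matrix.conjTranspose_eq_transpose_of_trivial]
  exact G.isSymm_adjMatrix

/-- The energy of a graph: the sum of the absolute values of the
eigenvalues of its adjacency matrix. -/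
def SimpleGraph.energy (G : SimpleGraph V) [DecidableRel G.Adj] : ℝ :=
  ∑ k, |G.isHermitian_adjMatrix'.eigenvalues k|

/-- The Randić index of a graph: the sum over the (unordered) edges `(i,j)`
of `1/√(deg i · deg j)`. -/
def SimpleGraph.randic (G : SimpleGraph V) [DecidableRel G.Adj] : ℝ :=
  ∑ e ∈ G.edgeFinset,
    Sym2.lift ⟨fun i j => 1 / Real.sqrt (G.degree i * G.degree j),
      fun i j => by simp [mul_comm]⟩ e

end

noncomputable section Aux

/-- elementary matrix -/
def EE {n : ℕ} (a b : Fin n) : Matrix (Fin n) (Fin n) ℝ :=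
  Matrix.of fun i j => if i = a ∧ j = b then 1 else 0

lemma trace_mul_EE {n : ℕ} (A : Matrix (Fin n) (Fin n) ℝ) (a b : Fin n) :
    (A * EE a b).trace = A b a := by
  simp [Matrix.trace, Matrix.diag, Matrix.mul_apply, EE, ite_and, mul_ite,
    Finset.sum_ite_eq, Finset.sum_ite_eq']

lemma quad_EE {n : ℕ} (a b : Fin n) (x : Fin n → ℝ) :
    ∑ i, ∑ j, x i * EE a b i j * x j = x a * x b := by
  simp [EE, ite_and, mul_ite, ite_mul, Finset.sum_ite_eq, Finset.sum_ite_eq']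

/-- trace duality bound -/
theorem trace_mul_le_sum_abs_eigen {n : ℕ} (A B : Matrix (Fin n) (Fin n) ℝ)
    (hA : A.IsHermitian)
    (hB : ∀ x : Fin n → ℝ, |∑ i, ∑ j, x i * B i j * x j| ≤ ∑ i, x i ^ 2) :
    (A * B).trace ≤ ∑ i, |hA.eigenvalues i| := by
  set U : Matrix (Fin n) (Fin n) ℝ := (hA.eigenvectorUnitary : Matrix (Fin n) (Fin n) ℝ) with hUdef
  have hUU : star U * U = 1 := (Unitary.mem_iff.mp hA.eigenvectorUnitary.2).1
  have hcol : ∀ i, ∑ j, (U j i) ^ 2 = 1 := by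
    intro i
    have h1 : (star U * U) i i = 1 := by rw [hUU]; simp [Matrix.one_apply]
    simpa [Matrix.mul_apply, Matrix.conjTranspose_apply, sq] using h1
  have hq : ∀ i, |∑ j, ∑ k, U j i * B j k * U k i| ≤ 1 := by
    intro i
    have := hB (fun j => U j i)
    rwa [hcol i] at this
  have h2 : (A * B).trace = ∑ i, hA.eigenvalues i * ∑ j, ∑ k, U j i * B j k * U k i := by
    conv_lhs => rw [hA.spectral_theorem, Unitary.conjStarAlgAut_apply]
    rw [Matrix.mul_assoc, Matrix.mul_assoc, Matrix.trace_mul_comm,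
      ← Matrix.mul_assoc]
    rw [Matrix.mul_assoc (Matrix.diagonal _), Matrix.mul_assoc (Matrix.diagonal _)]
    simp only [Matrix.trace, Matrix.diag, Matrix.diagonal_mul, Matrix.mul_apply,
      Matrix.conjTranspose_apply, star_trivial, Function.comp_apply, Finset.mul_sum, mul_assoc,
      Finset.sum_mul, RCLike.ofReal_real_eq_id, id_eq, Matrix.star_apply, star_trivial,
      Matrix.diagonal_apply, ite_mul, zero_mul, Finset.sum_ite_eq, Finset.sum_ite_eq',
      Finset.mem_univ, if_true, Finset.sum_ite_irrel, Finset.sum_const_zero]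
    rfl
  rw [h2]
  apply Finset.sum_le_sum
  intro i _
  calc hA.eigenvalues i * ∑ j, ∑ k, U j i * B j k * U k i
      ≤ |hA.eigenvalues i * ∑ j, ∑ k, U j i * B j k * U k i| := le_abs_self _
    _ = |hA.eigenvalues i| * |∑ j, ∑ k, U j i * B j k * U k i| := abs_mul _ _
    _ ≤ |hA.eigenvalues i| * 1 := mul_le_mul_of_nonneg_left (hq i) (abs_nonneg _)
    _ = |hA.eigenvalues i| := mul_one _

end Aux

noncomputable section Aux2

open Finset

/-- degree profile of the path on `n` vertices -/
def dd (n : ℕ) (k : ℕ) : ℝ := if k = 0 ∨ k = n - 1 then 1 else 2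

lemma dd_pos {n k : ℕ} : 0 < dd n k := by unfold dd; split <;> norm_num

lemma dd_le_two {n k : ℕ} : dd n k ≤ 2 := by unfold dd; split <;> norm_num

def cc (n : ℕ) (m : ℕ) : ℝ := 1 / Real.sqrt (dd n m * dd n (m + 1))

/-- the Randić matrix of the path embedded via `p` -/
def BB {n : ℕ} (p : ℕ → Fin n) : Matrix (Fin n) (Fin n) ℝ :=
  ∑ m ∈ Finset.range (n - 1), cc n m • (EE (p m) (p (m + 1)) + EE (p (m + 1)) (p m))

lemma quad_sum {n : ℕ} (s : Finset ℕ) (M : ℕ → Matrix (Fin n) (Fin n) ℝ) (x : Fin n → ℝ) :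
    ∑ i, ∑ j, x i * (∑ m ∈ s, M m) i j * x j = ∑ m ∈ s, ∑ i, ∑ j, x i * M m i j * x j := by
  simp only [Matrix.sum_apply, Finset.mul_sum, Finset.sum_mul]
  calc ∑ i, ∑ j, ∑ m ∈ s, x i * M m i j * x j
      = ∑ i, ∑ m ∈ s, ∑ j, x i * M m i j * x j :=
        Finset.sum_congr rfl fun i _ => Finset.sum_comm
    _ = ∑ m ∈ s, ∑ i, ∑ j, x i * M m i j * x j := Finset.sum_comm

lemma quad_BB {n : ℕ} (p : ℕ → Fin n) (x : Fin n → ℝ) :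
    ∑ i, ∑ j, x i * BB p i j * x j
      = ∑ m ∈ Finset.range (n - 1),
          cc n m * (x (p m) * x (p (m + 1)) + x (p (m + 1)) * x (p m)) := by
  rw [BB, quad_sum]
  apply Finset.sum_congr rfl
  intro m _
  have point : ∀ i j, x i * (cc n m • (EE (p m) (p (m+1)) + EE (p (m+1)) (p m))) i j * x j
      = cc n m * (x i * EE (p m) (p (m+1)) i j * x j)
        + cc n m * (x i * EE (p (m+1)) (p m) i j * x j) := by
    intro i j
    simp only [Matrix.smul_apply, Matrix.add_apply, smul_eq_mul]
    ring
  simp only [point, Finset.sum_add_distrib, ← Finset.mul_sum]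
  rw [quad_EE, quad_EE, mul_add]

lemma amgm {u v a b : ℝ} (hu : 0 < u) (hv : 0 < v) :
    |1 / Real.sqrt (u * v) * (a * b + b * a)| ≤ a ^ 2 / u + b ^ 2 / v := by
  have hsu : 0 < Real.sqrt u := Real.sqrt_pos.mpr hu
  have hsv : 0 < Real.sqrt v := Real.sqrt_pos.mpr hv
  have hu2 : Real.sqrt u ^ 2 = u := Real.sq_sqrt hu.le
  have hv2 : Real.sqrt v ^ 2 = v := Real.sq_sqrt hv.le
  have habs : |1 / Real.sqrt (u * v) * (a * b + b * a)|
      = 2 * (|a| / Real.sqrt u) * (|b| / Real.sqrt v) := by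
    have h2 : a * b + b * a = 2 * (a * b) := by ring
    rw [Real.sqrt_mul hu.le, h2, abs_mul, abs_mul, abs_mul]
    rw [abs_of_pos (by positivity : (0:ℝ) < 1 / (Real.sqrt u * Real.sqrt v))]
    rw [abs_two]
    field_simp
  rw [habs]
  calc 2 * (|a| / Real.sqrt u) * (|b| / Real.sqrt v)
      ≤ (|a| / Real.sqrt u) ^ 2 + (|b| / Real.sqrt v) ^ 2 := two_mul_le_add_sq _ _
    _ = a ^ 2 / u + b ^ 2 / v := by rw [div_pow, div_pow, sq_abs, sq_abs, hu2, hv2]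

lemma count_sum {n : ℕ} (hn : 2 ≤ n) (f : ℕ → ℝ) :
    ∑ m ∈ Finset.range (n - 1), (f m / dd n m + f (m + 1) / dd n (m + 1))
      = ∑ m ∈ Finset.range n, f m := by
  rw [Finset.sum_add_distrib]
  have h1 : ∑ m ∈ Finset.range (n-1), f (m+1) / dd n (m+1)
      = ∑ m ∈ Finset.range n, f m / dd n m - f 0 / dd n 0 := by
    have h := Finset.sum_range_succ' (fun m => f m / dd n m) (n-1)
    rw [show n - 1 + 1 = n from by omega] at h
    linarith
  have h2 : ∑ m ∈ Finset.range (n-1), f m / dd n m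
      = ∑ m ∈ Finset.range n, f m / dd n m - f (n-1) / dd n (n-1) := by
    have h := Finset.sum_range_succ (fun m => f m / dd n m) (n-1)
    rw [show n - 1 + 1 = n from by omega] at h
    linarith
  have hd0 : dd n 0 = 1 := by unfold dd; simp
  have hdn : dd n (n-1) = 1 := if_pos (Or.inr rfl)
  have key : ∑ m ∈ Finset.range n, (f m / dd n m + f m / dd n m)
      = ∑ m ∈ Finset.range n, f m + (f 0 + f (n-1)) := by
    have point : ∀ m ∈ Finset.range n, f m / dd n m + f m / dd n m
        = f m + ((if m = 0 then f m else 0) + (if m = n-1 then f m else 0)) := by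
      intro m _
      unfold dd
      by_cases hm0 : m = 0 <;> by_cases hm1 : m = n - 1 <;>
        simp [hm0, hm1] <;> first | omega | ring
    rw [Finset.sum_congr rfl point, Finset.sum_add_distrib, Finset.sum_add_distrib,
      Finset.sum_ite_eq' (Finset.range n) 0 f, Finset.sum_ite_eq' (Finset.range n) (n-1) f,
      if_pos (Finset.mem_range.mpr (by omega)), if_pos (Finset.mem_range.mpr (by omega))]
  rw [h1, h2, hd0, hdn, div_one, div_one]
  have := key
  rw [Finset.sum_add_distrib] at this
  linarith

end Aux2

noncomputable section Aux3

open Finset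

lemma quad_BB_bound {n : ℕ} (hn : 2 ≤ n) (p : ℕ → Fin n)
    (hp : Function.Bijective (fun m : Fin n => p m)) (x : Fin n → ℝ) :
    |∑ i, ∑ j, x i * BB p i j * x j| ≤ ∑ i, x i ^ 2 := by
  rw [quad_BB]
  calc |∑ m ∈ Finset.range (n-1), cc n m * (x (p m) * x (p (m+1)) + x (p (m+1)) * x (p m))|
      ≤ ∑ m ∈ Finset.range (n-1),
          |cc n m * (x (p m) * x (p (m+1)) + x (p (m+1)) * x (p m))| :=
        Finset.abs_sum_le_sum_abs _ _
    _ ≤ ∑ m ∈ Finset.range (n-1), (x (p m) ^ 2 / dd n m + x (p (m+1)) ^ 2 / dd n (m+1)) :=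
        Finset.sum_le_sum fun m _ => amgm dd_pos dd_pos
    _ = ∑ m ∈ Finset.range n, x (p m) ^ 2 := count_sum hn _
    _ = ∑ i, x i ^ 2 := by
        rw [← Fin.sum_univ_eq_sum_range (fun m => x (p m) ^ 2) n]
        exact Fintype.sum_bijective _ hp _ _ fun m => rfl

lemma trace_BB {n : ℕ} (p : ℕ → Fin n) (A : Matrix (Fin n) (Fin n) ℝ)
    (hA : ∀ m < n - 1, A (p m) (p (m+1)) = 1 ∧ A (p (m+1)) (p m) = 1) :
    (A * BB p).trace = ∑ m ∈ Finset.range (n-1), 2 * cc n m := by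
  rw [BB, Matrix.mul_sum, Matrix.trace_sum]
  apply Finset.sum_congr rfl
  intro m hm
  rw [Matrix.mul_smul, Matrix.trace_smul, Matrix.mul_add, Matrix.trace_add,
    trace_mul_EE, trace_mul_EE, (hA m (Finset.mem_range.mp hm)).1,
    (hA m (Finset.mem_range.mp hm)).2]
  simp only [smul_eq_mul]
  ring

lemma sqrt_two_le : Real.sqrt 2 ≤ 3 / 2 := by
  nlinarith [Real.sq_sqrt (by norm_num : (0:ℝ) ≤ 2), Real.sqrt_nonneg 2]

lemma one_le_two_cc {n m : ℕ} : (1:ℝ) ≤ 2 * cc n m := by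
  have hpos : 0 < dd n m * dd n (m+1) := mul_pos dd_pos dd_pos
  have h4 : dd n m * dd n (m+1) ≤ 4 := by
    nlinarith [dd_le_two (n := n) (k := m), dd_le_two (n := n) (k := m+1),
      dd_pos (n := n) (k := m), dd_pos (n := n) (k := m+1)]
  have hs : Real.sqrt (dd n m * dd n (m+1)) ≤ 2 := by
    rw [show (2:ℝ) = Real.sqrt 4 by
      rw [show (4:ℝ) = 2^2 by norm_num, Real.sqrt_sq (by norm_num : (0:ℝ) ≤ 2)]]
    exact Real.sqrt_le_sqrt h4
  have hspos : 0 < Real.sqrt (dd n m * dd n (m+1)) := Real.sqrt_pos.mpr hpos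
  rw [cc, mul_one_div, le_div_iff₀ hspos, one_mul]
  exact hs

lemma sqrt2_le_two_cc {n m : ℕ} (h : dd n m = 1 ∨ dd n (m+1) = 1) :
    Real.sqrt 2 ≤ 2 * cc n m := by
  have hpos : 0 < dd n m * dd n (m+1) := mul_pos dd_pos dd_pos
  have h2 : dd n m * dd n (m+1) ≤ 2 := by
    rcases h with h | h <;> rw [h] <;>
      [simpa using dd_le_two (n := n) (k := m+1); simpa using dd_le_two (n := n) (k := m)]
  have hs : Real.sqrt (dd n m * dd n (m+1)) ≤ Real.sqrt 2 := Real.sqrt_le_sqrt h2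
  have hspos : 0 < Real.sqrt (dd n m * dd n (m+1)) := Real.sqrt_pos.mpr hpos
  have h2pos : (0:ℝ) < Real.sqrt 2 := Real.sqrt_pos.mpr (by norm_num)
  rw [cc, mul_one_div, le_div_iff₀ hspos]
  calc Real.sqrt 2 * Real.sqrt (dd n m * dd n (m+1))
      ≤ Real.sqrt 2 * Real.sqrt 2 := by nlinarith
    _ = 2 := Real.mul_self_sqrt (by norm_num)

lemma sum_two_cc {n : ℕ} (hn : 2 ≤ n) :
    (n:ℝ) - 3 + 2 * Real.sqrt 2 ≤ ∑ m ∈ Finset.range (n-1), 2 * cc n m := by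
  rcases eq_or_lt_of_le hn with h2 | h3
  · subst h2
    have : ∑ m ∈ Finset.range (2-1), 2 * cc 2 m = 2 * cc 2 0 := by simp
    rw [this]
    have hc : cc 2 0 = 1 := by
      rw [cc, dd, dd]
      norm_num
    rw [hc]
    have := sqrt_two_le
    norm_num
    linarith
  · have h3' : 3 ≤ n := h3
    have hsub : ({0, n-2} : Finset ℕ) ⊆ Finset.range (n-1) := by
      intro m hm
      simp only [Finset.mem_insert, Finset.mem_singleton] at hm
      rcases hm with rfl | rfl <;> simp [Finset.mem_range] <;> omega
    have hne : (0:ℕ) ≠ n - 2 := by omega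
    rw [← Finset.sum_sdiff hsub]
    have hpair : ∑ m ∈ ({0, n-2} : Finset ℕ), 2 * cc n m = 2 * cc n 0 + 2 * cc n (n-2) :=
      Finset.sum_pair hne
    have hb1 : Real.sqrt 2 ≤ 2 * cc n 0 := sqrt2_le_two_cc (Or.inl (by unfold dd; simp))
    have hb2 : Real.sqrt 2 ≤ 2 * cc n (n-2) := by
      apply sqrt2_le_two_cc
      right
      rw [show n - 2 + 1 = n - 1 from by omega]
      exact if_pos (Or.inr rfl)
    have hcard : ((Finset.range (n-1)) \ ({0, n-2} : Finset ℕ)).card = n - 3 := by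
      rw [Finset.card_sdiff_of_subset hsub, Finset.card_range]
      rw [Finset.card_insert_of_notMem (by simp [hne]), Finset.card_singleton]
      omega
    have hrest : (n:ℝ) - 3 ≤ ∑ m ∈ (Finset.range (n-1)) \ ({0, n-2} : Finset ℕ), 2 * cc n m := by
      calc (n:ℝ) - 3 = ((n - 3 : ℕ) : ℝ) := by
            push_cast [Nat.cast_sub (by omega : 3 ≤ n)]
            ring
        _ = ((Finset.range (n-1)) \ ({0, n-2} : Finset ℕ)).card • (1:ℝ) := by
            rw [hcard]; simp
        _ ≤ ∑ m ∈ (Finset.range (n-1)) \ ({0, n-2} : Finset ℕ), 2 * cc n m :=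
            Finset.card_nsmul_le_sum _ _ _ fun m _ => one_le_two_cc
    rw [hpair]
    linarith

end Aux3

/-- If a graph `G` on `n ≥ 2` vertices has a Hamiltonian path, then
`E(G) ≥ n - 3 + 2√2`. -/
theorem stmt10 {n : ℕ} (hn : 2 ≤ n)
    (G : SimpleGraph (Fin n)) [DecidableRel G.Adj]
    (u v : Fin n) (w : G.Walk u v) (hw : w.IsHamiltonian) :
    (n : ℝ) - 3 + 2 * Real.sqrt 2 ≤ G.energy := by
  classical
  have hA : (G.adjMatrix ℝ).IsHermitian := G.isHermitian_adjMatrix'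
  set p : ℕ → Fin n := w.getVert with hpdef
  have hlen : w.length = n - 1 := by
    simpa [Fintype.card_fin] using hw.length_eq
  have hsurj : Function.Surjective (fun m : Fin n => p m) := by
    intro i
    have hi : i ∈ w.support := hw.mem_support i
    rw [SimpleGraph.Walk.mem_support_iff_exists_getVert] at hi
    obtain ⟨m, hm1, hm2⟩ := hi
    rw [hlen] at hm2
    exact ⟨⟨m, by omega⟩, hm1⟩
  have hbij : Function.Bijective (fun m : Fin n => p m) :=
    Finite.surjective_iff_bijective.mp hsurj
  have hadj : ∀ m < n - 1, (G.adjMatrix ℝ) (p m) (p (m+1)) = 1 ∧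
      (G.adjMatrix ℝ) (p (m+1)) (p m) = 1 := by
    intro m hm
    have h := w.adj_getVert_succ (show m < w.length by omega)
    constructor <;> simp [SimpleGraph.adjMatrix_apply, hpdef, h, h.symm]
  calc (n:ℝ) - 3 + 2 * Real.sqrt 2
      ≤ ∑ m ∈ Finset.range (n-1), 2 * cc n m := sum_two_cc hn
    _ = ((G.adjMatrix ℝ) * BB p).trace := (trace_BB p _ hadj).symm
    _ ≤ ∑ i, |hA.eigenvalues i| :=
        trace_mul_le_sum_abs_eigen _ _ hA (quad_BB_bound hn p hbij)
    _ = G.energy := rfl
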